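/- Let Ω > 0, let m₁, …, m_N be integers, let A₀, F₀ ∈ ℂ^{N×N} be diagonal matrices with A₀ − F₀ = iΩ·diag(m₁, …, m_N), let F₁ ∈ ℂ^{N×N}, and let (A₁^{(n)})_{n∈ℤ} and (P₁^{(n)})_{n∈ℤ} be families of matrices in ℂ^{N×N}. Fix l, j ∈ {1, …, N} with l ≠ j and (F₀)_{ll} = (F₀)_{jj}, and assume the Fourier-coefficient equation holds at n = m_l: iΩ·m_l·P₁^{(m_l)} − A₀·P₁^{(m_l)} + P₁^{(m_l)}·F₀ = Σ_{k=1}^{N} A₁^{(m_l − m_k)}·E_{kk} − Σ_{k=1}^{N} [m_l = m_k]·E_{kk}·F₁, where E_{kk} is the matrix unit with 1 in position (k,k) and 0 elsewhere, and [m_l = m_k] is 1 if m_l = m_k and 0 otherwise. Then the entry (F₁)_{lj} equals (A₁^{(m_l − m_j)})_{lj}. -/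

import Mathlib

open Matrix

/-- **Off-diagonal entries of the first-order Floquet correction at a degeneracy.** If
`(F₀)_{ll} = (F₀)_{jj}` for `l ≠ j`, then the Fourier coefficient equation at `n = m_l`
yields `(F₁)_{lj} = (A₁^{(m_l − m_j)})_{lj}`. -/
theorem first_order_floquet_offdiagonal {N : ℕ}
    (Ω : ℝ) (hΩ : 0 < Ω)
    (m : Fin N → ℤ)
    (A₀ F₀ : Matrix (Fin N) (Fin N) ℂ)
    (hA₀ : A₀.IsDiag) (hF₀ : F₀.IsDiag)
    (hfold : A₀ - F₀ = (Complex.I * (Ω : ℂ)) • Matrix.diagonal (fun k => (m k : ℂ)))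
    (F₁ : Matrix (Fin N) (Fin N) ℂ)
    (A₁ P₁ : ℤ → Matrix (Fin N) (Fin N) ℂ)
    (l j : Fin N) (hlj : l ≠ j) (hdeg : F₀ l l = F₀ j j)
    (heq : (Complex.I * (Ω : ℂ) * (m l : ℂ)) • P₁ (m l) - A₀ * P₁ (m l) + P₁ (m l) * F₀
      = (∑ k : Fin N, A₁ (m l - m k) * Matrix.single k k 1)
        - ∑ k : Fin N, (if m l = m k then (1 : ℂ) else 0) •
            (Matrix.single k k 1 * F₁)) :
    F₁ l j = A₁ (m l - m j) l j := by
  have hA : A₀ l l - F₀ l l = Complex.I * Ω * m l := by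
    have := congrArg (fun M : Matrix (Fin N) (Fin N) ℂ => M l l) hfold
    simpa using this
  have hAP : (A₀ * P₁ (m l)) l j = A₀ l l * P₁ (m l) l j := by
    rw [Matrix.mul_apply]
    exact Finset.sum_eq_single l (fun i _ hi => by rw [hA₀ (Ne.symm hi), zero_mul])
      (by simp)
  have hPF : (P₁ (m l) * F₀) l j = P₁ (m l) l j * F₀ j j := by
    rw [Matrix.mul_apply]
    exact Finset.sum_eq_single j (fun i _ hi => by rw [hF₀ hi, mul_zero]) (by simp)
  have hent := congrArg (fun M : Matrix (Fin N) (Fin N) ℂ => M l j) heq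
  simp only [Matrix.sub_apply, Matrix.add_apply, Matrix.smul_apply, Matrix.sum_apply,
    hAP, hPF, smul_eq_mul] at hent
  rw [Finset.sum_eq_single j (fun k _ hk => by
        simp [Matrix.mul_apply, Matrix.single, hk, Ne.symm hk]) (by simp),
      Finset.sum_eq_single l (fun k _ hk => by
        simp [Matrix.mul_apply, Matrix.single, hk, Ne.symm hk]) (by simp)] at hent
  simp [Matrix.single_mul_apply_same, Matrix.mul_single_apply_same] at hent
  rw [hdeg] at hA
  linear_combination hent + P₁ (m l) l j * hA
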